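/- Let A and B be finite categories, each having Möbius inversion, with Möbius functions μ_A and μ_B. Let F : A → B and G : B → A be functors with F left adjoint to G. Then for every object a of A and every object b of B, ∑_{a' : Fa' = b} μ_A(a, a') = ∑_{b' : Gb' = a} μ_B(b', b), where the left sum is over objects a' of A with Fa' = b and the right sum is over objects b' of B with Gb' = a. -/
import Mathlib


open CategoryTheory

open scoped Classical in
/-- **Proposition 4.4** (Leinster, generalizing Rota's main theorem on Galois
connections). Let `A`, `B` be finite categories with Möbius inversion and let
`F ⊣ G` be an adjunction between them.  Then
`∑_{a' : Fa' = b} μ_A(a, a') = ∑_{b' : Gb' = a} μ_B(b', b)` for all `a`, `b`. -/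
theorem stmt_18 {A : Type u₁} [Category.{v₁} A] [Fintype A]
    [∀ a b : A, Fintype (a ⟶ b)]
    {B : Type u₂} [Category.{v₂} B] [Fintype B]
    [∀ a b : B, Fintype (a ⟶ b)]
    (μA : A → A → ℚ)
    (hμA₁ : ∀ a c : A,
      ∑ b : A, μA a b * (Fintype.card (b ⟶ c) : ℚ) = if a = c then 1 else 0)
    (hμA₂ : ∀ a c : A,
      ∑ b : A, (Fintype.card (a ⟶ b) : ℚ) * μA b c = if a = c then 1 else 0)
    (μB : B → B → ℚ)
    (hμB₁ : ∀ a c : B,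
      ∑ b : B, μB a b * (Fintype.card (b ⟶ c) : ℚ) = if a = c then 1 else 0)
    (hμB₂ : ∀ a c : B,
      ∑ b : B, (Fintype.card (a ⟶ b) : ℚ) * μB b c = if a = c then 1 else 0)
    (F : A ⥤ B) (G : B ⥤ A) (adj : F ⊣ G) :
    ∀ (a : A) (b : B),
      ∑ a' : A, (if F.obj a' = b then μA a a' else 0) =
        ∑ b' : B, (if G.obj b' = a then μB b' b else 0) := by
  intro a b
  have hcard : ∀ (a' : A) (b' : B),
      (Fintype.card (F.obj a' ⟶ b') : ℚ) = Fintype.card (a' ⟶ G.obj b') := by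
    intro a' b'
    exact_mod_cast congrArg (Nat.cast (R := ℚ)) (Fintype.card_congr (adj.homEquiv a' b'))
  calc
    ∑ a' : A, (if F.obj a' = b then μA a a' else 0)
        = ∑ a' : A, μA a a' * (if F.obj a' = b then 1 else 0) := by
          simp [mul_ite]
    _ = ∑ a' : A, μA a a' *
          ∑ b' : B, (Fintype.card (F.obj a' ⟶ b') : ℚ) * μB b' b := by
          simp [hμB₂]
    _ = ∑ a' : A, ∑ b' : B,
          μA a a' * (Fintype.card (a' ⟶ G.obj b') : ℚ) * μB b' b := by
          simp [Finset.mul_sum, hcard, mul_assoc]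
    _ = ∑ b' : B, (∑ a' : A,
          μA a a' * (Fintype.card (a' ⟶ G.obj b') : ℚ)) * μB b' b := by
          rw [Finset.sum_comm]
          simp [Finset.sum_mul]
    _ = ∑ b' : B, (if a = G.obj b' then 1 else 0) * μB b' b := by
          simp [hμA₁]
    _ = ∑ b' : B, (if G.obj b' = a then μB b' b else 0) := by
          simp [ite_mul, eq_comm]
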